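/- (Biconjugate orthonormality of the QBIO process) Under the recurrences of the quaternion three-term biconjugate orthonormalization procedure (Algorithm 2), assuming no breakdown (all σⱼ ≠ 0, ρⱼ₊₁ ≠ 0, εⱼ₊₁ ≠ 0 for j ≤ m), the generated vectors satisfy ⟨vᵢ, wⱼ⟩ = 0 whenever i ≠ j and ⟨vⱼ, wⱼ⟩ = σⱼ, for all 1 ≤ i, j ≤ m. -/

import Mathlib

open Quaternion Matrix

/-- The quaternionic inner product `⟨x, y⟩ = Σᵢ yᵢ* xᵢ` on `ℚⁿ`. -/
noncomputable def qInner {n : ℕ} (x y : Fin n → ℍ[ℝ]) : ℍ[ℝ] :=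
  ∑ i, star (y i) * x i

/-- The quaternionic Euclidean norm `‖x‖₂ = √(Σᵢ |xᵢ|²)` on `ℚⁿ`. -/
noncomputable def qNorm {n : ℕ} (x : Fin n → ℍ[ℝ]) : ℝ :=
  Real.sqrt (∑ i, ‖x i‖ ^ 2)

lemma qInner_zero_left {n : ℕ} (y : Fin n → ℍ[ℝ]) : qInner (0 : Fin n → ℍ[ℝ]) y = 0 := by
  simp [qInner]

lemma qInner_zero_right {n : ℕ} (x : Fin n → ℍ[ℝ]) : qInner x 0 = 0 := by simp [qInner]

lemma qInner_mul_left {n : ℕ} (x y : Fin n → ℍ[ℝ]) (q : ℍ[ℝ]) :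
    qInner (fun k => x k * q) y = qInner x y * q := by
  simp [qInner, Finset.sum_mul, mul_assoc]

lemma qInner_mul_right {n : ℕ} (x y : Fin n → ℍ[ℝ]) (q : ℍ[ℝ]) :
    qInner x (fun k => y k * q) = star q * qInner x y := by
  simp [qInner, Finset.mul_sum, mul_assoc]

lemma qInner_comb_left {n : ℕ} (a b c y : Fin n → ℍ[ℝ]) (p q : ℍ[ℝ]) :
    qInner (fun k => a k - b k * p - c k * q) y
      = qInner a y - qInner b y * p - qInner c y * q := by
  simp [qInner, mul_sub, Finset.sum_sub_distrib, Finset.sum_mul, mul_assoc]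

lemma qInner_comb_right {n : ℕ} (x a b c : Fin n → ℍ[ℝ]) (p q : ℍ[ℝ]) :
    qInner x (fun k => a k - b k * p - c k * q)
      = qInner x a - star p * qInner x b - star q * qInner x c := by
  simp [qInner, sub_mul, StarMul.star_mul, Finset.sum_sub_distrib, Finset.mul_sum, mul_assoc]

lemma qInner_comb3_right {n : ℕ} (x a b c : Fin n → ℍ[ℝ]) (p q r : ℍ[ℝ]) :
    qInner x (fun k => a k * p + b k * q + c k * r)
      = star p * qInner x a + star q * qInner x b + star r * qInner x c := by
  simp [qInner, add_mul, StarMul.star_mul, Finset.sum_add_distrib, Finset.mul_sum, mul_assoc]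

lemma qInner_comb3_left {n : ℕ} (a b c y : Fin n → ℍ[ℝ]) (p q r : ℍ[ℝ]) :
    qInner (fun k => a k * p + b k * q + c k * r) y
      = qInner a y * p + qInner b y * q + qInner c y * r := by
  simp [qInner, mul_add, Finset.sum_add_distrib, Finset.sum_mul, mul_assoc]

lemma qInner_adjoint {n : ℕ} (A : Matrix (Fin n) (Fin n) ℍ[ℝ]) (x y : Fin n → ℍ[ℝ]) :
    qInner (A *ᵥ x) y = qInner x (Aᴴ *ᵥ y) := by
  simp only [qInner, mulVec, dotProduct, conjTranspose_apply, Finset.mul_sum, Finset.sum_mul,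
    star_sum, StarMul.star_mul, star_star]
  rw [Finset.sum_comm]
  simp [mul_assoc]

lemma quat_coe_ne {r : ℝ} (h : r ≠ 0) : ((r : ℝ) : ℍ[ℝ]) ≠ 0 :=
  fun hc => h (Quaternion.coe_inj.mp (by simpa using hc))

lemma quat_aux1 (r : ℝ) (a s : ℍ[ℝ]) (ha : a ≠ 0) :
    a * ((r : ℍ[ℝ]) * a⁻¹ * s) = (r : ℍ[ℝ]) * s := by
  rw [Quaternion.coe_commutes, mul_assoc (a⁻¹), ← mul_assoc a, mul_inv_cancel₀ ha, one_mul]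

lemma quat_aux2 (r : ℝ) (a s : ℍ[ℝ]) (ha : a ≠ 0) :
    star ((r : ℍ[ℝ]) * (star a)⁻¹ * star s) * a = (r : ℍ[ℝ]) * s := by
  have h1 : star ((r : ℍ[ℝ]) * (star a)⁻¹ * star s) = s * (a⁻¹ * (r : ℍ[ℝ])) := by
    simp only [StarMul.star_mul, star_star, Quaternion.star_coe, star_inv₀, mul_assoc]
  rw [h1, ← Quaternion.coe_commutes, ← mul_assoc s, mul_assoc (s * (r : ℍ[ℝ])),
    inv_mul_cancel₀ ha, mul_one, ← Quaternion.coe_commutes]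

lemma quat_aux3 (a q : ℍ[ℝ]) (ha : a ≠ 0) :
    star ((star a)⁻¹ * star q) * a = q := by
  simp only [StarMul.star_mul, star_star, star_inv₀]
  rw [mul_assoc, inv_mul_cancel₀ ha, mul_one]

lemma quat_aux4 (a q : ℍ[ℝ]) (ha : a ≠ 0) : a * (a⁻¹ * q) = q := by
  rw [← mul_assoc, mul_inv_cancel₀ ha, one_mul]

theorem qbio_biconjugate_orthonormality {n : ℕ} (m : ℕ)
    (A : Matrix (Fin n) (Fin n) ℍ[ℝ])
    (v w vbar wbar : ℕ → Fin n → ℍ[ℝ])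
    (σ α αbar τ : ℕ → ℍ[ℝ]) (ρ ε : ℕ → ℝ)
    (hv0 : v 0 = 0) (hw0 : w 0 = 0) (hτ1 : τ 1 = 0)
    (hv1 : qNorm (v 1) = 1) (hw1 : qNorm (w 1) = 1)
    (hσ : ∀ j, 1 ≤ j → j ≤ m → σ j = qInner (v j) (w j))
    (hσne : ∀ j, 1 ≤ j → j ≤ m → σ j ≠ 0)
    (hα : ∀ j, 1 ≤ j → j < m → α j = (σ j)⁻¹ * qInner (A *ᵥ v j) (w j))
    (hαbar : ∀ j, 1 ≤ j → j < m →
      αbar j = (star (σ j))⁻¹ * star (qInner (A *ᵥ v j) (w j)))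
    (hvbar : ∀ j, 1 ≤ j → j < m →
      vbar (j + 1) = fun k => (A *ᵥ v j) k - v j k * α j - v (j - 1) k * τ j)
    (hwbar : ∀ j, 1 ≤ j → j < m →
      wbar (j + 1) = fun k => (Aᴴ *ᵥ w j) k - w j k * αbar j -
        w (j - 1) k * (((ρ j : ℝ) : ℍ[ℝ]) * (star (σ (j - 1)))⁻¹ * star (σ j)))
    (hρ : ∀ j, 1 ≤ j → j < m → ρ (j + 1) = qNorm (vbar (j + 1)))
    (hε : ∀ j, 1 ≤ j → j < m → ε (j + 1) = qNorm (wbar (j + 1)))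
    (hρne : ∀ j, 1 ≤ j → j < m → ρ (j + 1) ≠ 0)
    (hεne : ∀ j, 1 ≤ j → j < m → ε (j + 1) ≠ 0)
    (hvn : ∀ j, 1 ≤ j → j < m →
      v (j + 1) = fun k => vbar (j + 1) k / ((ρ (j + 1) : ℝ) : ℍ[ℝ]))
    (hwn : ∀ j, 1 ≤ j → j < m →
      w (j + 1) = fun k => wbar (j + 1) k / ((ε (j + 1) : ℝ) : ℍ[ℝ]))
    (hτ : ∀ j, 1 ≤ j → j < m →
      τ (j + 1) = ((ε (j + 1) : ℝ) : ℍ[ℝ]) * (σ j)⁻¹ * σ (j + 1)) :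
    ∀ i j, 1 ≤ i → i ≤ m → 1 ≤ j → j ≤ m →
      (i ≠ j → qInner (v i) (w j) = 0) ∧ qInner (v j) (w j) = σ j := by
  have hvbar' : ∀ j, 1 ≤ j → j < m →
      vbar (j + 1) = fun k => v (j + 1) k * ((ρ (j + 1) : ℝ) : ℍ[ℝ]) := by
    intro j h1 h2
    rw [hvn j h1 h2]
    funext k
    exact (div_mul_cancel₀ _ (quat_coe_ne (hρne j h1 h2))).symm
  have hwbar' : ∀ j, 1 ≤ j → j < m →
      wbar (j + 1) = fun k => w (j + 1) k * ((ε (j + 1) : ℝ) : ℍ[ℝ]) := by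
    intro j h1 h2
    rw [hwn j h1 h2]
    funext k
    exact (div_mul_cancel₀ _ (quat_coe_ne (hεne j h1 h2))).symm
  have hAv : ∀ j, 1 ≤ j → j < m → (A *ᵥ v j) =
      fun k => v (j + 1) k * ((ρ (j + 1) : ℝ) : ℍ[ℝ]) + v j k * α j + v (j - 1) k * τ j := by
    intro j h1 h2
    funext k
    have h3 : v (j + 1) k * ((ρ (j + 1) : ℝ) : ℍ[ℝ]) =
        (A *ᵥ v j) k - v j k * α j - v (j - 1) k * τ j :=
      congrFun ((hvbar' j h1 h2).symm.trans (hvbar j h1 h2)) k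
    rw [h3]
    abel
  have hAw : ∀ j, 1 ≤ j → j < m → (Aᴴ *ᵥ w j) =
      fun k => w (j + 1) k * ((ε (j + 1) : ℝ) : ℍ[ℝ]) + w j k * αbar j +
        w (j - 1) k * (((ρ j : ℝ) : ℍ[ℝ]) * (star (σ (j - 1)))⁻¹ * star (σ j)) := by
    intro j h1 h2
    funext k
    have h3 : w (j + 1) k * ((ε (j + 1) : ℝ) : ℍ[ℝ]) =
        (Aᴴ *ᵥ w j) k - w j k * αbar j -
          w (j - 1) k * (((ρ j : ℝ) : ℍ[ℝ]) * (star (σ (j - 1)))⁻¹ * star (σ j)) :=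
      congrFun ((hwbar' j h1 h2).symm.trans (hwbar j h1 h2)) k
    rw [h3]
    abel
  have key : ∀ k, k ≤ m → ∀ i j, 1 ≤ i → i ≤ k → 1 ≤ j → j ≤ k → i ≠ j →
      qInner (v i) (w j) = 0 := by
    intro k
    induction k with
    | zero => intro _ i j hi1 hik _ _ _; omega
    | succ kk ih =>
      intro hkm i j hi1 hik hj1 hjk hij
      by_cases hcase : i ≤ kk ∧ j ≤ kk
      · exact ih (by omega) i j hi1 hcase.1 hj1 hcase.2 hij
      push_neg at hcase
      have hkk1 : 1 ≤ kk := by omega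
      have hkkm : kk < m := by omega
      have IH : ∀ i j, 1 ≤ i → i ≤ kk → 1 ≤ j → j ≤ kk → i ≠ j → qInner (v i) (w j) = 0 :=
        fun i j a b c d e => ih (by omega) i j a b c d e
      have orth : ∀ i j, i ≤ kk → j ≤ kk → i ≠ j → qInner (v i) (w j) = 0 := by
        intro i j hik hjk hij
        rcases Nat.eq_zero_or_pos i with h0 | h1
        · subst h0; rw [hv0]; exact qInner_zero_left _
        rcases Nat.eq_zero_or_pos j with h0' | h1'
        · subst h0'; rw [hw0]; exact qInner_zero_right _
        exact IH i j h1 hik h1' hjk hij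
      have vstep : ∀ j, 1 ≤ j → j ≤ kk → qInner (v (kk + 1)) (w j) = 0 := by
        intro j hj1 hjkk
        have hval : qInner (vbar (kk + 1)) (w j) =
            qInner (v (kk + 1)) (w j) * ((ρ (kk + 1) : ℝ) : ℍ[ℝ]) := by
          rw [hvbar' kk hkk1 hkkm]; exact qInner_mul_left _ _ _
        have hexp : qInner (vbar (kk + 1)) (w j) =
            qInner (A *ᵥ v kk) (w j) - qInner (v kk) (w j) * α kk -
              qInner (v (kk - 1)) (w j) * τ kk := by
          rw [hvbar kk hkk1 hkkm]
          exact qInner_comb_left (A *ᵥ v kk) (v kk) (v (kk - 1)) (w j) (α kk) (τ kk)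
        have hz : qInner (vbar (kk + 1)) (w j) = 0 := by
          rcases Nat.lt_or_ge j kk with hjlt | hjge
          · rcases Nat.lt_or_ge j (kk - 1) with hjlt2 | hjge2
            · -- j < kk - 1
              have hAdj : qInner (A *ᵥ v kk) (w j) = 0 := by
                rw [qInner_adjoint, hAw j hj1 (by omega), qInner_comb3_right,
                    orth kk (j + 1) le_rfl (by omega) (by omega),
                    orth kk j le_rfl (by omega) (by omega),
                    orth kk (j - 1) le_rfl (by omega) (by omega)]
                simp
              rw [hexp, hAdj, orth kk j le_rfl (by omega) (by omega),
                  orth (kk - 1) j (by omega) (by omega) (by omega)]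
              simp
            · -- j = kk - 1, kk ≥ 2
              have hj : j = kk - 1 := by omega
              subst hj
              have e1 : kk - 1 + 1 = kk := by omega
              have hτkk := hτ (kk - 1) (by omega) (by omega)
              rw [e1] at hτkk
              have hAdj : qInner (A *ᵥ v kk) (w (kk - 1)) = ((ε kk : ℝ) : ℍ[ℝ]) * σ kk := by
                rw [qInner_adjoint, hAw (kk - 1) (by omega) (by omega), e1, qInner_comb3_right,
                    ← hσ kk hkk1 (by omega),
                    orth kk (kk - 1) le_rfl (by omega) (by omega),
                    orth kk (kk - 1 - 1) le_rfl (by omega) (by omega)]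
                simp [Quaternion.star_coe]
              rw [hexp, hAdj, hτkk, orth kk (kk - 1) le_rfl (by omega) (by omega),
                  ← hσ (kk - 1) (by omega) (by omega),
                  quat_aux1 _ _ _ (hσne (kk - 1) (by omega) (by omega))]
              simp
          · -- j = kk
            have hj : j = kk := by omega
            rw [hj] at hexp ⊢
            rw [hexp, ← hσ kk hkk1 (by omega), hα kk hkk1 hkkm,
                quat_aux4 _ _ (hσne kk hkk1 (by omega)),
                orth (kk - 1) kk (by omega) le_rfl (by omega)]
            simp
        rw [hval] at hz
        exact (mul_eq_zero.mp hz).resolve_right (quat_coe_ne (hρne kk hkk1 hkkm))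
      have wstep : ∀ i, 1 ≤ i → i ≤ kk → qInner (v i) (w (kk + 1)) = 0 := by
        intro i hi1 hikk
        have hval : qInner (v i) (wbar (kk + 1)) =
            star (((ε (kk + 1) : ℝ)) : ℍ[ℝ]) * qInner (v i) (w (kk + 1)) := by
          rw [hwbar' kk hkk1 hkkm]; exact qInner_mul_right _ _ _
        have hexp : qInner (v i) (wbar (kk + 1)) =
            qInner (v i) (Aᴴ *ᵥ w kk) - star (αbar kk) * qInner (v i) (w kk) -
              star (((ρ kk : ℝ) : ℍ[ℝ]) * (star (σ (kk - 1)))⁻¹ * star (σ kk)) *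
                qInner (v i) (w (kk - 1)) := by
          rw [hwbar kk hkk1 hkkm]
          exact qInner_comb_right (v i) (Aᴴ *ᵥ w kk) (w kk) (w (kk - 1)) (αbar kk) _
        have hz : qInner (v i) (wbar (kk + 1)) = 0 := by
          rcases Nat.lt_or_ge i kk with hilt | hige
          · rcases Nat.lt_or_ge i (kk - 1) with hilt2 | hige2
            · -- i < kk - 1
              have hAdj : qInner (v i) (Aᴴ *ᵥ w kk) = 0 := by
                rw [← qInner_adjoint, hAv i hi1 (by omega), qInner_comb3_left,
                    orth (i + 1) kk (by omega) le_rfl (by omega),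
                    orth i kk (by omega) le_rfl (by omega),
                    orth (i - 1) kk (by omega) le_rfl (by omega)]
                simp
              rw [hexp, hAdj, orth i kk (by omega) le_rfl (by omega),
                  orth i (kk - 1) (by omega) (by omega) (by omega)]
              simp
            · -- i = kk - 1, kk ≥ 2
              have hi' : i = kk - 1 := by omega
              subst hi'
              have e1 : kk - 1 + 1 = kk := by omega
              have hAdj : qInner (v (kk - 1)) (Aᴴ *ᵥ w kk) = σ kk * ((ρ kk : ℝ) : ℍ[ℝ]) := by
                rw [← qInner_adjoint, hAv (kk - 1) (by omega) (by omega), e1, qInner_comb3_left,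
                    ← hσ kk hkk1 (by omega),
                    orth (kk - 1) kk (by omega) le_rfl (by omega),
                    orth (kk - 1 - 1) kk (by omega) le_rfl (by omega)]
                simp
              rw [hexp, hAdj, orth (kk - 1) kk (by omega) le_rfl (by omega),
                  ← hσ (kk - 1) (by omega) (by omega),
                  quat_aux2 _ _ _ (hσne (kk - 1) (by omega) (by omega))]
              simp [← Quaternion.coe_commutes]
          · -- i = kk
            have hi' : i = kk := by omega
            rw [hi'] at hexp ⊢
            rw [hexp, ← qInner_adjoint, hαbar kk hkk1 hkkm, ← hσ kk hkk1 (by omega),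
                quat_aux3 _ _ (hσne kk hkk1 (by omega)),
                orth kk (kk - 1) le_rfl (by omega) (by omega)]
            simp
        rw [hval, Quaternion.star_coe] at hz
        exact (mul_eq_zero.mp hz).resolve_left (quat_coe_ne (hεne kk hkk1 hkkm))
      rcases Nat.lt_or_ge i (kk + 1) with hi | hi
      · have hj : j = kk + 1 := by omega
        subst hj
        exact wstep i hi1 (by omega)
      · have hi' : i = kk + 1 := by omega
        subst hi'
        exact vstep j hj1 (by omega)
  intro i j hi1 him hj1 hjm
  exact ⟨fun hij => key m le_rfl i j hi1 him hj1 hjm hij, (hσ j hj1 hjm).symm⟩
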